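/- Let V be a 2-dimensional oriented real inner product space with metric g, almost complex structure J (rotation by π/2, characterized by da(u,v) = g(Ju,v)), and let g_t be a family of inner products with g_0 = g, δg = g(A·,·) with A self-adjoint. Let J_t be the almost complex structure of g_t. Then δJ·J = A₀, where A₀ = A − (1/2)tr(A)·Id is the traceless part of A. -/

import Mathlib

open Matrix

/-- Variation of the almost complex structure: for a family of inner products `g_t`
(Gram matrices `G t`) on an oriented 2-dimensional space, with almost complex structures
`J_t` characterized by `da_t(·,·) = g_t(J_t·,·)` (in matrices, `(J t)ᵀ * G t` equals the
matrix of the area form, `√det(G t)` times the standard symplectic matrix), and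
`δg = g(A·,·)` with `A` self-adjoint, one has `δJ·J = A₀ = A − (1/2)(tr A)·Id`. -/
theorem stmt_7 (G J : ℝ → Matrix (Fin 2) (Fin 2) ℝ)
    (δG δJ A : Matrix (Fin 2) (Fin 2) ℝ)
    (hpos : ∀ t, (G t).PosDef)
    (hGd : ∀ i j, HasDerivAt (fun t => G t i j) (δG i j) 0)
    (hJd : ∀ i j, HasDerivAt (fun t => J t i j) (δJ i j) 0)
    (hA : δG = G 0 * A) (hAsym : Aᵀ * G 0 = G 0 * A)
    (hJ : ∀ t, (J t)ᵀ * G t = Real.sqrt ((G t).det) • !![0, 1; (-1 : ℝ), 0]) :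
    δJ * J 0 = A - ((1 / 2) * Matrix.trace A) • (1 : Matrix (Fin 2) (Fin 2) ℝ) := by
  set Ω : Matrix (Fin 2) (Fin 2) ℝ := !![0, 1; (-1 : ℝ), 0] with hΩ
  have hG0 := hpos 0
  have hdet0 : 0 < (G 0).det := hG0.det_pos
  set s0 : ℝ := Real.sqrt ((G 0).det) with hs0def
  have hs0 : 0 < s0 := Real.sqrt_pos.2 hdet0
  have hs0sq : s0 * s0 = (G 0).det := Real.mul_self_sqrt hdet0.le
  have hsym : G 0 0 1 = G 0 1 0 := by
    conv_lhs => rw [← hG0.1]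
    simp [Matrix.conjTranspose_apply]
  have hGT : (G 0)ᵀ = G 0 := by
    ext i j
    fin_cases i <;> fin_cases j <;> simp [Matrix.transpose_apply, hsym]
  -- derivative of det
  set δd : ℝ := δG 0 0 * G 0 1 1 + G 0 0 0 * δG 1 1 - (δG 0 1 * G 0 1 0 + G 0 0 1 * δG 1 0) with hδddef
  have hdetd : HasDerivAt (fun t => (G t).det) δd 0 := by
    have : (fun t => (G t).det) = fun t => G t 0 0 * G t 1 1 - G t 0 1 * G t 1 0 := by
      funext t; exact Matrix.det_fin_two (G t)
    rw [this]
    exact (((hGd 0 0).mul (hGd 1 1)).sub ((hGd 0 1).mul (hGd 1 0)))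
  have hsd : HasDerivAt (fun t => Real.sqrt ((G t).det)) (δd / (2 * s0)) 0 :=
    hdetd.sqrt hdet0.ne'
  -- entrywise derivative equations
  have key : ∀ i j : Fin 2,
      δJ 0 i * G 0 0 j + J 0 0 i * δG 0 j + (δJ 1 i * G 0 1 j + J 0 1 i * δG 1 j)
        = (δd / (2 * s0)) * Ω i j := by
    intro i j
    have h1 : HasDerivAt (fun t => J t 0 i * G t 0 j + J t 1 i * G t 1 j)
        (δJ 0 i * G 0 0 j + J 0 0 i * δG 0 j + (δJ 1 i * G 0 1 j + J 0 1 i * δG 1 j)) 0 :=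
      ((hJd 0 i).mul (hGd 0 j)).add ((hJd 1 i).mul (hGd 1 j))
    have h2 : HasDerivAt (fun t => Real.sqrt ((G t).det) * Ω i j)
        ((δd / (2 * s0)) * Ω i j) 0 := hsd.mul_const _
    have hfun : (fun t => J t 0 i * G t 0 j + J t 1 i * G t 1 j)
        = fun t => Real.sqrt ((G t).det) * Ω i j := by
      funext t
      have := congrFun (congrFun (hJ t) i) j
      simpa [Matrix.mul_apply, Fin.sum_univ_two, Matrix.transpose_apply,
        Matrix.smul_apply, smul_eq_mul] using this
    rw [hfun] at h1
    exact h1.unique h2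
  -- δd = det * trace A
  have hδG : ∀ i j, δG i j = G 0 i 0 * A 0 j + G 0 i 1 * A 1 j := by
    intro i j
    rw [hA]
    simp [Matrix.mul_apply, Fin.sum_univ_two]
  have hδd : δd = (G 0).det * A.trace := by
    rw [hδddef, Matrix.det_fin_two, Matrix.trace_fin_two, hδG, hδG, hδG, hδG]
    ring
  have hδs : δd / (2 * s0) = (A.trace / 2) * s0 := by
    rw [hδd, ← hs0sq]
    field_simp
  -- matrix-level derivative equation
  have hd' : δJᵀ * G 0 + (J 0)ᵀ * δG = ((A.trace / 2) * s0) • Ω := by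
    ext i j
    have h := key i j
    rw [hδs] at h
    fin_cases i <;> fin_cases j <;>
      simp only [Matrix.add_apply, Matrix.mul_apply, Fin.sum_univ_two,
        Matrix.transpose_apply, Matrix.smul_apply, smul_eq_mul] <;> linarith [h]
  have h0 : (J 0)ᵀ * G 0 = s0 • Ω := hJ 0
  -- solve for δJ
  have hstep : δJᵀ * G 0 = (A.trace / 2) • ((J 0)ᵀ * G 0) - (J 0)ᵀ * (G 0 * A) := by
    rw [h0, smul_smul, ← hA, eq_sub_iff_add_eq]
    exact hd'
  have htrans : G 0 * δJ = G 0 * ((A.trace / 2) • J 0 - A * J 0) := by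
    have h := congrArg Matrix.transpose hstep
    simp only [Matrix.transpose_mul, Matrix.transpose_smul, Matrix.transpose_sub,
      Matrix.transpose_transpose, hGT] at h
    rw [h, Matrix.mul_sub, Matrix.mul_smul, ← Matrix.mul_assoc, hAsym, Matrix.mul_assoc]
  have hdetu : IsUnit (G 0).det := isUnit_iff_ne_zero.2 hdet0.ne'
  have hδJ : δJ = (A.trace / 2) • J 0 - A * J 0 := by
    have h := Matrix.nonsing_inv_mul_cancel_left (G 0) δJ hdetu
    rw [htrans, Matrix.nonsing_inv_mul_cancel_left _ _ hdetu] at h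
    exact h.symm
  -- explicit entries of J 0
  have h0e : ∀ i j : Fin 2, J 0 0 i * G 0 0 j + J 0 1 i * G 0 1 j = s0 * Ω i j := by
    intro i j
    have := congrFun (congrFun h0 i) j
    simpa [Matrix.mul_apply, Fin.sum_univ_two, Matrix.transpose_apply,
      Matrix.smul_apply, smul_eq_mul] using this
  have e00 := h0e 0 0
  have e01 := h0e 0 1
  have e10 := h0e 1 0
  have e11 := h0e 1 1
  simp only [hΩ] at e00 e01 e10 e11
  norm_num [Matrix.cons_val_zero, Matrix.cons_val_one, Matrix.head_cons] at e00 e01 e10 e11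
  have hdet2 : s0 * s0 = G 0 0 0 * G 0 1 1 - G 0 0 1 * G 0 1 0 := by
    rw [hs0sq, Matrix.det_fin_two]
  have hm00 : J 0 0 0 * s0 = -(G 0 1 0) :=
    mul_right_cancel₀ hs0.ne' (by
      linear_combination G 0 1 1 * e00 - G 0 1 0 * e01 + J 0 0 0 * hdet2)
  have hm10 : J 0 1 0 * s0 = G 0 0 0 :=
    mul_right_cancel₀ hs0.ne' (by
      linear_combination -(G 0 0 1) * e00 + G 0 0 0 * e01 + J 0 1 0 * hdet2)
  have hm01 : J 0 0 1 * s0 = -(G 0 1 1) :=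
    mul_right_cancel₀ hs0.ne' (by
      linear_combination G 0 1 1 * e10 - G 0 1 0 * e11 + J 0 0 1 * hdet2)
  have hm11 : J 0 1 1 * s0 = G 0 0 1 :=
    mul_right_cancel₀ hs0.ne' (by
      linear_combination -(G 0 0 1) * e10 + G 0 0 0 * e11 + J 0 1 1 * hdet2)
  have hs2 : s0 * s0 ≠ 0 := by positivity
  have hJJ : J 0 * J 0 = -1 := by
    ext i j
    fin_cases i <;> fin_cases j <;>
      simp only [Matrix.mul_apply, Fin.sum_univ_two, Matrix.neg_apply, Matrix.one_apply,
        Fin.mk_zero, Fin.mk_one] <;> norm_num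
    · apply mul_right_cancel₀ hs2
      linear_combination (J 0 0 0 * s0 - G 0 1 0) * hm00 + (J 0 1 0 * s0) * hm01
        - G 0 1 1 * hm10 + hdet2 - G 0 1 0 * hsym
    · apply mul_right_cancel₀ hs2
      linear_combination (J 0 0 1 * s0) * hm00 + (J 0 1 1 * s0 - G 0 1 0) * hm01
        - G 0 1 1 * hm11 - G 0 1 1 * hsym
    · apply mul_right_cancel₀ hs2
      linear_combination (J 0 1 0 * s0) * hm00 + (J 0 1 1 * s0 - G 0 1 0) * hm10
        + G 0 0 0 * hm11 + G 0 0 0 * hsym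
    · apply mul_right_cancel₀ hs2
      linear_combination (J 0 0 1 * s0) * hm10 + (J 0 1 1 * s0 + G 0 0 1) * hm11
        + G 0 0 0 * hm01 + hdet2 + G 0 0 1 * hsym
  -- conclude
  rw [hδJ, Matrix.sub_mul, Matrix.smul_mul, Matrix.mul_assoc, hJJ]
  rw [Matrix.mul_neg, Matrix.mul_one, sub_neg_eq_add, smul_neg]
  ext i j
  fin_cases i <;> fin_cases j <;>
    simp [Matrix.add_apply, Matrix.neg_apply, Matrix.smul_apply, Matrix.one_apply,
      Matrix.sub_apply, Matrix.trace_fin_two] <;> ring
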